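/- Let π(f₁), π(f₂|f₁) be prior densities and p₁(y|f₁), p₂(y|f₁,f₂) be two likelihoods (for the same data y). Define the modular posterior p_M(f₁,f₂|y) = m(f₁)·m(f₂|f₁), where m(f₁) = π(f₁)p₁(y|f₁)/∫π(f₁)p₁(y|f₁)df₁ and m(f₂|f₁) = π(f₂|f₁)p₂(y|f₁,f₂)/∫π(f₂|f₁)p₂(y|f₁,f₂)df₂. Then p_M(f₁,f₂|y) = π_d(f₁,f₂)·p₂(y|f₁,f₂)/p₂(y), where π_d(f₁,f₂) = π(f₁)π(f₂|f₁)·p₁(f₁|y)/p₂(f₁|y), p₁(f₁|y) is the posterior of f₁ under model p₁, p₂(f₁|y) is the marginal posterior of f₁ under model p₂, and p₂(y) = ∬π(f₁)π(f₂|f₁)p₂(y|f₁,f₂)df₂df₁. That is, the modular posterior equals the Bayesian posterior under likelihood p₂ with the data-dependent prior π_d. -/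

import Mathlib

open MeasureTheory

lemma integral_pos_of_pos {f : ℝ → ℝ} (hf : ∀ x, 0 < f x) (hfi : Integrable f) :
    0 < ∫ x, f x := by
  rw [integral_pos_iff_support_of_nonneg (fun x => (hf x).le) hfi]
  have : Function.support f = Set.univ := by
    ext x; simp [(hf x).ne']
  simp [this]

/-- the modular posterior `m(f₁)·m(f₂|f₁)` equals the Bayesian posterior
under likelihood `p₂` with the data-dependent prior
`π_d(f₁,f₂) = π(f₁)π(f₂|f₁)·p₁(f₁|y)/p₂(f₁|y)`. -/
theorem modular_posterior_eq_dataDependent_bayes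
    (pi1 : ℝ → ℝ) (pi2 : ℝ → ℝ → ℝ) (p1 : ℝ → ℝ) (p2 : ℝ → ℝ → ℝ)
    (hpi1 : ∀ f₁, 0 < pi1 f₁) (hpi2 : ∀ f₁ f₂, 0 < pi2 f₁ f₂)
    (hp1 : ∀ f₁, 0 < p1 f₁) (hp2 : ∀ f₁ f₂, 0 < p2 f₁ f₂)
    (hint1 : Integrable (fun f₁ => pi1 f₁ * p1 f₁))
    (hint2 : ∀ f₁, Integrable (fun f₂ => pi2 f₁ f₂ * p2 f₁ f₂))
    (hint12 : Integrable (fun f₁ => pi1 f₁ * ∫ f₂, pi2 f₁ f₂ * p2 f₁ f₂)) :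
    ∀ f₁ f₂,
      -- modular posterior m(f₁) · m(f₂|f₁)
      (pi1 f₁ * p1 f₁ / (∫ g₁, pi1 g₁ * p1 g₁)) *
        (pi2 f₁ f₂ * p2 f₁ f₂ / (∫ g₂, pi2 f₁ g₂ * p2 f₁ g₂))
      =
      -- data-dependent prior π_d(f₁,f₂) = π(f₁)π(f₂|f₁)·p₁(f₁|y)/p₂(f₁|y) ...
      (pi1 f₁ * pi2 f₁ f₂ *
        ((pi1 f₁ * p1 f₁ / (∫ g₁, pi1 g₁ * p1 g₁)) /
          ((∫ g₂, pi1 f₁ * pi2 f₁ g₂ * p2 f₁ g₂) /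
            (∫ g₁, ∫ g₂, pi1 g₁ * pi2 g₁ g₂ * p2 g₁ g₂))))
      -- ... times likelihood p₂(y|f₁,f₂) divided by p₂(y)
        * p2 f₁ f₂ / (∫ g₁, ∫ g₂, pi1 g₁ * pi2 g₁ g₂ * p2 g₁ g₂) := by
  intro f₁ f₂
  have hinner : ∀ g₁, (∫ g₂, pi1 g₁ * pi2 g₁ g₂ * p2 g₁ g₂)
      = pi1 g₁ * ∫ g₂, pi2 g₁ g₂ * p2 g₁ g₂ := by
    intro g₁
    simp_rw [mul_assoc]
    exact integral_const_mul _ _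
  have hC : (∫ g₁, ∫ g₂, pi1 g₁ * pi2 g₁ g₂ * p2 g₁ g₂)
      = ∫ g₁, pi1 g₁ * ∫ g₂, pi2 g₁ g₂ * p2 g₁ g₂ := by
    simp_rw [hinner]
  have hI : ∀ g₁, 0 < ∫ g₂, pi2 g₁ g₂ * p2 g₁ g₂ := fun g₁ =>
    integral_pos_of_pos (fun x => mul_pos (hpi2 g₁ x) (hp2 g₁ x)) (hint2 g₁)
  have hZ1 : 0 < ∫ g₁, pi1 g₁ * p1 g₁ :=
    integral_pos_of_pos (fun x => mul_pos (hpi1 x) (hp1 x)) hint1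
  have hCpos : 0 < ∫ g₁, pi1 g₁ * ∫ g₂, pi2 g₁ g₂ * p2 g₁ g₂ :=
    integral_pos_of_pos (fun x => mul_pos (hpi1 x) (hI x)) hint12
  rw [hC, hinner f₁]
  have h1 := (hpi1 f₁).ne'
  have h2 := (hI f₁).ne'
  field_simp
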